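/- Define η_CB(s; z) := Σ_{m=0}^∞ (2z)^{2m+1}/(binom(2m+1,m+1/2)·(m+1/2)^s) where binom(2m+1,m+1/2) = Γ(2m+2)/Γ(m+3/2)². For every integer n ≥ −1 and real z with |z| < 1, η_CB(−n; z) = (π/2) · z·q_n(z²) / (2^n (1−z²)^{n+3/2}), where q_n are Lehmer's polynomials (q_{−1}=1, q_{n+1}(x) = (2(n+1)x+1)q_n(x) + 2x(1−x)q_n'(x)). -/

import Mathlib

open Polynomial

/-- Lehmer's polynomials `q_n` for `n ≥ -1`, indexed so that `lehmerQ (n+1) = q_n`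
(`lehmerQ 0 = q_{-1} = 1`), with recurrence
`q_{n+1}(x) = (2(n+1)x + 1) q_n(x) + 2x(1-x) q_n'(x)`. -/
noncomputable def lehmerQ : ℕ → Polynomial ℤ
  | 0 => 1
  | (k + 1) => (C (2 * (k : ℤ)) * X + 1) * lehmerQ k
      + 2 * X * (1 - X) * derivative (lehmerQ k)

/-- Lehmer's polynomials `p_n` for `n ≥ -1`, indexed so that `lehmerP (n+1) = p_n`
(`lehmerP 0 = p_{-1} = 0`), with recurrence
`p_{n+1}(x) = 2(nx + 1) p_n(x) + 2x(1-x) p_n'(x) + q_n(x)`. -/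
noncomputable def lehmerP : ℕ → Polynomial ℤ
  | 0 => 0
  | (k + 1) => 2 * (C ((k : ℤ) - 1) * X + 1) * lehmerP k
      + 2 * X * (1 - X) * derivative (lehmerP k) + lehmerQ k

/-- The half-integer binomial coefficient `binom(2m+1, m+1/2) = Γ(2m+2)/Γ(m+3/2)²`. -/
noncomputable def halfBinom (m : ℕ) : ℝ :=
  Real.Gamma (2 * m + 2) / (Real.Gamma ((m : ℝ) + 3 / 2)) ^ 2

noncomputable def aa (m : ℕ) : ℝ := m.centralBinom / 4 ^ m

lemma centralBinom_le_four_pow (n : ℕ) : n.centralBinom ≤ 4 ^ n := by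
  induction n with
  | zero => simp [Nat.centralBinom]
  | succ n ih =>
    have h := Nat.succ_mul_centralBinom_succ n
    have h2 : (n + 1) * Nat.centralBinom (n + 1) ≤ (n + 1) * 4 ^ (n + 1) := by
      rw [h]
      calc 2 * (2 * n + 1) * n.centralBinom ≤ (4 * (n + 1)) * n.centralBinom :=
            Nat.mul_le_mul_right _ (by omega)
        _ = (n + 1) * (4 * n.centralBinom) := by ring
        _ ≤ (n + 1) * (4 * 4 ^ n) := Nat.mul_le_mul_left _ (Nat.mul_le_mul_left _ ih)
        _ = (n + 1) * 4 ^ (n + 1) := by ring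
    exact Nat.le_of_mul_le_mul_left h2 n.succ_pos

lemma aa_nonneg (m : ℕ) : 0 ≤ aa m := by unfold aa; positivity

lemma aa_le_one (m : ℕ) : aa m ≤ 1 := by
  rw [aa, div_le_one (show (0:ℝ) < 4 ^ m by positivity)]
  exact_mod_cast centralBinom_le_four_pow m

lemma aa_rec (m : ℕ) : 2 * ((m : ℝ) + 1) * aa (m + 1) = (2 * m + 1) * aa m := by
  have h := Nat.succ_mul_centralBinom_succ m
  have h' : ((m : ℝ) + 1) * Nat.centralBinom (m + 1) = 2 * (2 * m + 1) * Nat.centralBinom m := by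
    exact_mod_cast congrArg (Nat.cast : ℕ → ℝ) h
  rw [aa, aa]
  rw [pow_succ]
  field_simp
  linear_combination 2 * h'

lemma conv_sum (n : ℕ) : ∑ k ∈ Finset.range (n + 1), aa k * aa (n - k) = 1 := by
  induction n with
  | zero => simp [aa, Nat.centralBinom]
  | succ n ih =>
    have refl1 : ∑ k ∈ Finset.range (n + 2), ((n : ℝ) + 1 - k) * (aa k * aa (n + 1 - k)) =
        ∑ k ∈ Finset.range (n + 2), (k : ℝ) * (aa k * aa (n + 1 - k)) := by
      rw [← Finset.sum_range_reflect (fun k => (k : ℝ) * (aa k * aa (n + 1 - k))) (n + 2)]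
      apply Finset.sum_congr rfl
      intro k hk
      simp only [Finset.mem_range] at hk
      have hk' : k ≤ n + 1 := by omega
      have e1 : n + 2 - 1 - k = n + 1 - k := by omega
      have e2 : n + 1 - (n + 1 - k) = k := by omega
      rw [e1, e2]
      have : ((n + 1 - k : ℕ) : ℝ) = (n : ℝ) + 1 - k := by
        push_cast [Nat.cast_sub hk'] ; ring
      rw [this]
      ring
    have key : ((n : ℝ) + 1) * ∑ k ∈ Finset.range (n + 2), aa k * aa (n + 1 - k) =
        2 * ∑ k ∈ Finset.range (n + 2), (k : ℝ) * (aa k * aa (n + 1 - k)) := by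
      have h3 : ((n : ℝ) + 1) * ∑ k ∈ Finset.range (n + 2), aa k * aa (n + 1 - k) =
          ∑ k ∈ Finset.range (n + 2), (((n : ℝ) + 1 - k) * (aa k * aa (n + 1 - k))
            + (k : ℝ) * (aa k * aa (n + 1 - k))) := by
        rw [Finset.mul_sum]
        apply Finset.sum_congr rfl
        intro k _; ring
      rw [h3, Finset.sum_add_distrib, refl1, two_mul]
    have shift : ∑ k ∈ Finset.range (n + 2), (k : ℝ) * (aa k * aa (n + 1 - k)) =
        ∑ j ∈ Finset.range (n + 1), ((j : ℝ) + 1) * (aa (j + 1) * aa (n - j)) := by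
      rw [Finset.sum_range_succ' (fun k => (k : ℝ) * (aa k * aa (n + 1 - k))) (n + 1)]
      simp only [Nat.cast_zero, zero_mul, add_zero]
      apply Finset.sum_congr rfl
      intro j hj
      simp only [Finset.mem_range] at hj
      have : n + 1 - (j + 1) = n - j := by omega
      rw [this]; push_cast; ring
    have rec' : ∀ j : ℕ, 2 * (((j : ℝ) + 1) * (aa (j + 1) * aa (n - j))) =
        (2 * j + 1) * (aa j * aa (n - j)) := by
      intro j
      have := aa_rec j
      linear_combination aa (n - j) * this
    have combine : 2 * ∑ j ∈ Finset.range (n + 1), ((j : ℝ) + 1) * (aa (j + 1) * aa (n - j)) =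
        ∑ j ∈ Finset.range (n + 1), (2 * (j : ℝ) + 1) * (aa j * aa (n - j)) := by
      rw [Finset.mul_sum]
      exact Finset.sum_congr rfl fun j _ => rec' j
    have refl0 : ∑ k ∈ Finset.range (n + 1), ((n : ℝ) - k) * (aa k * aa (n - k)) =
        ∑ k ∈ Finset.range (n + 1), (k : ℝ) * (aa k * aa (n - k)) := by
      rw [← Finset.sum_range_reflect (fun k => (k : ℝ) * (aa k * aa (n - k))) (n + 1)]
      apply Finset.sum_congr rfl
      intro k hk
      simp only [Finset.mem_range] at hk
      have hk' : k ≤ n := by omega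
      have e1 : n + 1 - 1 - k = n - k := by omega
      have e2 : n - (n - k) = k := by omega
      rw [e1, e2]
      have : ((n - k : ℕ) : ℝ) = (n : ℝ) - k := by
        push_cast [Nat.cast_sub hk'] ; ring
      rw [this]; ring
    have final : ∑ j ∈ Finset.range (n + 1), (2 * (j : ℝ) + 1) * (aa j * aa (n - j)) =
        ((n : ℝ) + 1) * ∑ j ∈ Finset.range (n + 1), aa j * aa (n - j) := by
      have t1 : ∑ j ∈ Finset.range (n + 1), (2 * (j : ℝ) + 1) * (aa j * aa (n - j)) =
          2 * (∑ j ∈ Finset.range (n + 1), (j : ℝ) * (aa j * aa (n - j)))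
            + ∑ j ∈ Finset.range (n + 1), aa j * aa (n - j) := by
        rw [Finset.mul_sum, ← Finset.sum_add_distrib]
        exact Finset.sum_congr rfl fun j _ => by ring
      have t3 : ∑ j ∈ Finset.range (n + 1), (j : ℝ) * (aa j * aa (n - j))
            + ∑ j ∈ Finset.range (n + 1), ((n : ℝ) - j) * (aa j * aa (n - j)) =
          (n : ℝ) * ∑ j ∈ Finset.range (n + 1), aa j * aa (n - j) := by
        rw [← Finset.sum_add_distrib, Finset.mul_sum]
        exact Finset.sum_congr rfl fun j _ => by ring
      have t2 : 2 * (∑ j ∈ Finset.range (n + 1), (j : ℝ) * (aa j * aa (n - j))) =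
          (n : ℝ) * ∑ j ∈ Finset.range (n + 1), aa j * aa (n - j) := by
        rw [← t3, ← refl0]; ring
      rw [t1, t2]; ring
    have hfin : ((n : ℝ) + 1) * ∑ k ∈ Finset.range (n + 2), aa k * aa (n + 1 - k) =
        ((n : ℝ) + 1) * ∑ j ∈ Finset.range (n + 1), aa j * aa (n - j) := by
      rw [key, shift, combine, final]
    have hne : ((n : ℝ) + 1) ≠ 0 := by positivity
    have := mul_left_cancel₀ hne hfin
    rw [this, ih]

lemma summable_aa_pow {t : ℝ} (h0 : 0 ≤ t) (h1 : t < 1) :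
    Summable (fun m => aa m * t ^ m) := by
  apply Summable.of_norm_bounded (g := fun m => t ^ m) (summable_geometric_of_lt_one h0 h1)
  intro m
  rw [Real.norm_eq_abs, abs_of_nonneg (mul_nonneg (aa_nonneg m) (pow_nonneg h0 m))]
  calc aa m * t ^ m ≤ 1 * t ^ m := by
        apply mul_le_mul_of_nonneg_right (aa_le_one m) (by positivity)
    _ = t ^ m := one_mul _

lemma hasSum_aa {t : ℝ} (h0 : 0 ≤ t) (h1 : t < 1) :
    HasSum (fun m => aa m * t ^ m) (1 / Real.sqrt (1 - t)) := by
  have hs := summable_aa_pow h0 h1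
  have hnorm : Summable (fun m => ‖aa m * t ^ m‖) := by
    apply Summable.congr (summable_aa_pow h0 h1).abs
    intro m; rw [Real.norm_eq_abs]
  set F := ∑' m, aa m * t ^ m with hF
  have hsq : F * F = (1 - t)⁻¹ := by
    rw [hF, tsum_mul_tsum_eq_tsum_sum_range_of_summable_norm hnorm hnorm]
    rw [← tsum_geometric_of_lt_one h0 h1]
    apply tsum_congr
    intro n
    calc ∑ k ∈ Finset.range (n + 1), aa k * t ^ k * (aa (n - k) * t ^ (n - k))
        = ∑ k ∈ Finset.range (n + 1), aa k * aa (n - k) * t ^ n := by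
          apply Finset.sum_congr rfl
          intro k hk
          simp only [Finset.mem_range] at hk
          have : t ^ k * t ^ (n - k) = t ^ n := by
            rw [← pow_add]; congr 1; omega
          calc aa k * t ^ k * (aa (n - k) * t ^ (n - k))
              = aa k * aa (n - k) * (t ^ k * t ^ (n - k)) := by ring
            _ = aa k * aa (n - k) * t ^ n := by rw [this]
      _ = t ^ n := by rw [← Finset.sum_mul, conv_sum n, one_mul]
  have hFnonneg : 0 ≤ F := tsum_nonneg (fun m => mul_nonneg (aa_nonneg m) (pow_nonneg h0 m))
  have h1t : (0:ℝ) < 1 - t := by linarith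
  have hFval : F = 1 / Real.sqrt (1 - t) := by
    have : F = Real.sqrt (F * F) := (Real.sqrt_mul_self hFnonneg).symm
    rw [this, hsq, Real.sqrt_inv, one_div]
  rw [← hFval]
  exact hs.hasSum

lemma summable_pow_succ_mul_geometric {r : ℝ} (hr : |r| < 1) (k : ℕ) :
    Summable (fun m : ℕ => ((m : ℝ) + 1) ^ k * r ^ m) := by
  have h : Summable (fun m : ℕ => (2:ℝ) ^ k * ((m : ℝ) ^ k * |r| ^ m)) :=
    (summable_pow_mul_geometric_of_norm_lt_one (R := ℝ) k
      (by rwa [Real.norm_eq_abs, abs_abs])).mul_left _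
  apply Summable.of_norm_bounded_eventually_nat h
  filter_upwards [Filter.eventually_ge_atTop 1] with m hm
  rw [Real.norm_eq_abs, abs_mul, abs_pow, abs_pow,
    abs_of_nonneg (by positivity : (0:ℝ) ≤ (m : ℝ) + 1)]
  have hm1 : ((m : ℝ) + 1) ≤ 2 * m := by
    have h1 : (1:ℝ) ≤ m := by exact_mod_cast hm
    linarith
  calc ((m : ℝ) + 1) ^ k * |r| ^ m ≤ (2 * m) ^ k * |r| ^ m := by
        apply mul_le_mul_of_nonneg_right (pow_le_pow_left₀ (by positivity) hm1 k) (by positivity)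
    _ = 2 ^ k * ((m : ℝ) ^ k * |r| ^ m) := by rw [mul_pow]; ring


noncomputable def G (N : ℕ) (z : ℝ) : ℝ :=
  z * aeval (z ^ 2) (lehmerQ N) / (2 ^ N * (1 - z ^ 2) ^ ((N : ℝ) + 1 / 2))

lemma aeval_eq_eval_map (P : Polynomial ℤ) (x : ℝ) :
    aeval x P = (P.map (Int.castRingHom ℝ)).eval x := by
  rw [aeval_def, eval_map]
  rfl

lemma lehmerQ_succ_eval (N : ℕ) (x : ℝ) :
    (aeval x (lehmerQ (N + 1)) : ℝ) = (2 * N * x + 1) * aeval x (lehmerQ N)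
      + 2 * x * (1 - x) * aeval x (derivative (lehmerQ N)) := by
  rw [show lehmerQ (N + 1) = (C (2 * (N : ℤ)) * X + 1) * lehmerQ N
      + 2 * X * (1 - X) * derivative (lehmerQ N) from rfl]
  simp only [map_add, map_mul, map_sub, map_one, aeval_C, aeval_X, map_ofNat]
  push_cast
  ring

lemma hasDerivAt_G (N : ℕ) {z : ℝ} (hz : |z| < 1) :
    ∃ D : ℝ, HasDerivAt (G N) D z ∧ z / 2 * D = G (N + 1) z := by
  have hz2 : z ^ 2 < 1 := by
    have := abs_nonneg z
    nlinarith [sq_abs z]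
  have hA : (0:ℝ) < 1 - z ^ 2 := by linarith
  set p : ℝ := (N : ℝ) + 1 / 2 with hp
  set Pr : Polynomial ℝ := (lehmerQ N).map (Int.castRingHom ℝ) with hPr
  set E : ℝ := Pr.eval (z ^ 2) with hE
  set E' : ℝ := Pr.derivative.eval (z ^ 2) with hE'
  set A : ℝ := 1 - z ^ 2 with hAdef
  set s : ℝ := A ^ p with hs
  have hspos : 0 < s := Real.rpow_pos_of_pos hA p
  -- numerator derivative
  have hsq : HasDerivAt (fun y : ℝ => y ^ 2) (2 * z) z := by
    simpa using hasDerivAt_pow 2 z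
  have h1 : HasDerivAt (fun y : ℝ => Pr.eval (y ^ 2)) (E' * (2 * z)) z :=
    (Polynomial.hasDerivAt Pr (z ^ 2)).comp z hsq (h₂ := fun x => Pr.eval x)
  have hnum : HasDerivAt (fun y : ℝ => y * Pr.eval (y ^ 2))
      (1 * E + z * (E' * (2 * z))) z := by
    simpa [Pi.mul_def] using (hasDerivAt_id z).mul h1
  -- denominator derivative
  have hin : HasDerivAt (fun y : ℝ => 1 - y ^ 2) (-(2 * z)) z := by
    simpa [Pi.sub_def] using (hasDerivAt_const z (1:ℝ)).sub hsq
  have hden : HasDerivAt (fun y : ℝ => (2:ℝ) ^ N * (1 - y ^ 2) ^ p)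
      ((2:ℝ) ^ N * (-(2 * z) * p * A ^ (p - 1))) z :=
    (hin.rpow_const (Or.inl hA.ne')).const_mul _
  have hdenne : (2:ℝ) ^ N * A ^ p ≠ 0 :=
    (mul_pos (by positivity) (Real.rpow_pos_of_pos hA p)).ne'
  have hGdef : G N = fun y => (y * Pr.eval (y ^ 2)) / ((2:ℝ) ^ N * (1 - y ^ 2) ^ p) := by
    funext y
    rw [G, aeval_eq_eval_map]
  have hdiv := hnum.div hden hdenne
  refine ⟨_, by rw [hGdef]; exact hdiv, ?_⟩
  -- algebra
  have hApm : A ^ (p - 1) = s / A := by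
    rw [hs, Real.rpow_sub hA, Real.rpow_one]
  have hcast : (((N + 1 : ℕ)) : ℝ) + 1 / 2 = p + 1 := by rw [hp]; push_cast; ring
  have hAp1 : A ^ ((((N + 1 : ℕ)) : ℝ) + 1 / 2) = s * A := by
    rw [hcast, Real.rpow_add hA, Real.rpow_one, hs]
  have hE2 : aeval (z ^ 2) (lehmerQ N) = E := by rw [aeval_eq_eval_map]
  have hE'2 : aeval (z ^ 2) (derivative (lehmerQ N)) = E' := by
    rw [aeval_eq_eval_map, hE', hPr, Polynomial.derivative_map]
  rw [G, lehmerQ_succ_eval, hE2, hE'2, ← hAdef, ← hs, hApm, hAp1]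
  rw [hp]
  have hAne : A ≠ 0 := hA.ne'
  have hsne : s ≠ 0 := hspos.ne'
  field_simp
  ring

lemma key_hasSum (N : ℕ) : ∀ z : ℝ, |z| < 1 →
    HasSum (fun m => aa m * ((m : ℝ) + 1 / 2) ^ N * z ^ (2 * m + 1)) (G N z) := by
  induction N with
  | zero =>
    intro z hz
    have hz2 : z ^ 2 < 1 := by nlinarith [sq_abs z, abs_nonneg z]
    have h := (hasSum_aa (sq_nonneg z) hz2).mul_left z
    have hG : G 0 z = z * (1 / Real.sqrt (1 - z ^ 2)) := by
      rw [G]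
      have e1 : aeval (z ^ 2) (lehmerQ 0) = (1 : ℝ) := by
        rw [show lehmerQ 0 = 1 from rfl, map_one]
      have e2 : ((0 : ℕ) : ℝ) + 1 / 2 = (1 / 2 : ℝ) := by norm_num
      rw [e1, e2, pow_zero, one_mul, mul_one, Real.sqrt_eq_rpow]
      rw [one_div, div_eq_mul_inv]
      norm_num
    have hfun : (fun m => aa m * ((m : ℝ) + 1 / 2) ^ 0 * z ^ (2 * m + 1)) =
        fun m => z * (aa m * (z ^ 2) ^ m) := by
      funext m
      rw [pow_zero, mul_one, pow_succ, ← pow_mul]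
      ring
    rw [hfun, hG]
    exact h
  | succ N ih =>
    intro z hz
    set r : ℝ := (|z| + 1) / 2 with hr
    have hr1 : r < 1 := by rw [hr]; linarith
    have hzr : |z| < r := by rw [hr]; linarith
    have hr0 : 0 < r := lt_of_le_of_lt (abs_nonneg z) hzr
    have ht : IsOpen (Metric.ball (0:ℝ) r) := Metric.isOpen_ball
    have hconn : IsPreconnected (Metric.ball (0:ℝ) r) :=
      (convex_ball (0:ℝ) r).isPreconnected
    have memabs : ∀ y ∈ Metric.ball (0:ℝ) r, |y| < r := by
      intro y hy
      simpa [Metric.mem_ball, Real.dist_eq] using hy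
    have hzt : z ∈ Metric.ball (0:ℝ) r := by
      simp [Metric.mem_ball, Real.dist_eq, hzr]
    have hu : Summable (fun m : ℕ => 2 * (((m:ℝ) + 1) ^ (N + 1) * (r ^ 2) ^ m)) := by
      apply Summable.mul_left
      apply summable_pow_succ_mul_geometric
      rw [abs_of_nonneg (by positivity : (0:ℝ) ≤ r ^ 2)]
      nlinarith
    have hg : ∀ m : ℕ, ∀ y ∈ Metric.ball (0:ℝ) r,
        HasDerivAt (fun y => aa m * ((m : ℝ) + 1 / 2) ^ N * y ^ (2 * m + 1))
          (aa m * ((m : ℝ) + 1 / 2) ^ N * ((2 * (m:ℝ) + 1) * y ^ (2 * m))) y := by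
      intro m y _
      have h := (hasDerivAt_pow (2 * m + 1) y).const_mul (aa m * ((m : ℝ) + 1 / 2) ^ N)
      convert h using 1
      · rfl
      · rfl
      simp only [Nat.add_sub_cancel]
      push_cast
      ring
    have hg' : ∀ m : ℕ, ∀ y ∈ Metric.ball (0:ℝ) r,
        ‖aa m * ((m : ℝ) + 1 / 2) ^ N * ((2 * (m:ℝ) + 1) * y ^ (2 * m))‖ ≤
          2 * (((m:ℝ) + 1) ^ (N + 1) * (r ^ 2) ^ m) := by
      intro m y hy
      have hyr := memabs y hy
      have hy0 := abs_nonneg y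
      rw [Real.norm_eq_abs, abs_mul, abs_mul, abs_mul, abs_pow, abs_pow]
      rw [abs_of_nonneg (aa_nonneg m),
        abs_of_nonneg (by positivity : (0:ℝ) ≤ (m:ℝ) + 1/2),
        abs_of_nonneg (by positivity : (0:ℝ) ≤ 2 * (m:ℝ) + 1)]
      have b1 : aa m ≤ 1 := aa_le_one m
      have b2 : ((m:ℝ) + 1/2) ^ N ≤ ((m:ℝ) + 1) ^ N :=
        pow_le_pow_left₀ (by positivity) (by linarith) N
      have b3 : |y| ^ (2 * m) ≤ (r ^ 2) ^ m := by
        rw [← pow_mul]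
        exact pow_le_pow_left₀ hy0 hyr.le (2 * m)
      have b4 : (2 * (m:ℝ) + 1) * |y| ^ (2 * m) ≤ (2 * (m:ℝ) + 2) * (r ^ 2) ^ m := by
        apply mul_le_mul (by linarith) b3 (by positivity) (by positivity)
      calc aa m * ((m:ℝ) + 1/2) ^ N * ((2 * (m:ℝ) + 1) * |y| ^ (2 * m))
          ≤ 1 * ((m:ℝ) + 1) ^ N * ((2 * (m:ℝ) + 2) * (r ^ 2) ^ m) := by
            apply mul_le_mul (mul_le_mul b1 b2 (by positivity) (by norm_num)) b4
              (by positivity) (by positivity)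
        _ = 2 * (((m:ℝ) + 1) ^ (N + 1) * (r ^ 2) ^ m) := by rw [pow_succ]; ring
    have hg0 : Summable (fun m => aa m * ((m : ℝ) + 1 / 2) ^ N * z ^ (2 * m + 1)) :=
      (ih z hz).summable
    have hder := hasDerivAt_tsum_of_isPreconnected hu ht hconn hg hg' hzt hg0 hzt
    obtain ⟨D, hD, hDG⟩ := hasDerivAt_G N hz
    have hEq : (fun y => ∑' m, aa m * ((m : ℝ) + 1 / 2) ^ N * y ^ (2 * m + 1))
        =ᶠ[nhds z] G N := by
      filter_upwards [ht.mem_nhds hzt] with y hy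
      exact (ih y ((memabs y hy).trans hr1)).tsum_eq
    have hderG : HasDerivAt (G N)
        (∑' m, aa m * ((m : ℝ) + 1 / 2) ^ N * ((2 * (m:ℝ) + 1) * z ^ (2 * m))) z :=
      hder.congr_of_eventuallyEq hEq.symm
    have hsum' : Summable (fun m =>
        aa m * ((m : ℝ) + 1 / 2) ^ N * ((2 * (m:ℝ) + 1) * z ^ (2 * m))) :=
      Summable.of_norm_bounded hu (fun m => hg' m z hzt)
    have htsum : (∑' m, aa m * ((m : ℝ) + 1 / 2) ^ N * ((2 * (m:ℝ) + 1) * z ^ (2 * m))) = D :=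
      hderG.unique hD
    have hhs : HasSum (fun m =>
        aa m * ((m : ℝ) + 1 / 2) ^ N * ((2 * (m:ℝ) + 1) * z ^ (2 * m))) D :=
      htsum ▸ hsum'.hasSum
    have hfin := hhs.mul_left (z / 2)
    have hfun : (fun m => aa m * ((m : ℝ) + 1 / 2) ^ (N + 1) * z ^ (2 * m + 1)) =
        fun m => z / 2 * (aa m * ((m : ℝ) + 1 / 2) ^ N * ((2 * (m:ℝ) + 1) * z ^ (2 * m))) := by
      funext m
      rw [pow_succ ((m:ℝ) + 1/2), pow_succ z]
      ring
    rw [hfun, ← hDG]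
    exact hfin

lemma gamma_half (m : ℕ) : Real.Gamma ((m : ℝ) + 3 / 2) =
    ((2 * m + 1).factorial : ℝ) / (4 ^ m * (m.factorial : ℝ)) * (Real.sqrt Real.pi / 2) := by
  induction m with
  | zero =>
    rw [show ((0:ℕ):ℝ) + 3/2 = 1/2 + 1 by norm_num,
      Real.Gamma_add_one (by norm_num : (1/2 : ℝ) ≠ 0), Real.Gamma_one_half_eq]
    rw [Real.sqrt_eq_rpow]
    norm_num [Nat.factorial]
    ring
  | succ m ih =>
    have hcast : ((m + 1 : ℕ) : ℝ) + 3/2 = ((m : ℝ) + 3/2) + 1 := by push_cast; ring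
    have e1n : (2 * (m + 1) + 1).factorial = (2 * m + 3) * ((2 * m + 2) * (2 * m + 1).factorial) := by
      have a1 : 2 * (m + 1) + 1 = (2 * m + 2) + 1 := by omega
      rw [a1, Nat.factorial_succ]
      have a2 : 2 * m + 2 = (2 * m + 1) + 1 := by omega
      rw [a2, Nat.factorial_succ]
    rw [hcast, Real.Gamma_add_one (by positivity), ih, e1n, Nat.factorial_succ m]
    have hf : ((m.factorial : ℝ)) ≠ 0 := by exact_mod_cast m.factorial_ne_zero
    have h4 : (4:ℝ) ^ m ≠ 0 := by positivity
    push_cast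
    field_simp
    ring

lemma halfBinom_eq (m : ℕ) : halfBinom m =
    4 * 16 ^ m * ((m.factorial : ℝ)) ^ 2 / (((2 * m + 1).factorial : ℝ) * Real.pi) := by
  have hGsq : (Real.Gamma ((m : ℝ) + 3 / 2)) ^ 2 =
      ((2 * m + 1).factorial : ℝ) ^ 2 * Real.pi / ((4 ^ m * (m.factorial : ℝ)) ^ 2 * 4) := by
    rw [gamma_half, mul_pow, div_pow, div_pow, Real.sq_sqrt Real.pi_nonneg]
    ring
  have hGnat : Real.Gamma (2 * (m : ℝ) + 2) = ((2 * m + 1).factorial : ℝ) := by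
    rw [show 2 * (m : ℝ) + 2 = ((2 * m + 1 : ℕ) : ℝ) + 1 by push_cast; ring,
      Real.Gamma_nat_eq_factorial]
  rw [halfBinom, hGnat, hGsq]
  have hf : ((m.factorial : ℝ)) ≠ 0 := by exact_mod_cast m.factorial_ne_zero
  have hf2 : (((2 * m + 1).factorial : ℝ)) ≠ 0 := by exact_mod_cast (2 * m + 1).factorial_ne_zero
  have h16 : (16 : ℝ) ^ m = 4 ^ m * 4 ^ m := by
    rw [show (16:ℝ) = 4 * 4 by norm_num, mul_pow]
  rw [h16]
  have h4 : (4:ℝ) ^ m ≠ 0 := by positivity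
  field_simp

lemma summand_eq (n : ℤ) (N : ℕ) (hN : (N : ℤ) = n + 1) (z : ℝ) (m : ℕ) :
    (2 * z) ^ (2 * m + 1) * ((m : ℝ) + 1 / 2) ^ n / halfBinom m =
      Real.pi * (aa m * ((m : ℝ) + 1 / 2) ^ N * z ^ (2 * m + 1)) := by
  have hx : (0:ℝ) < (m : ℝ) + 1 / 2 := by positivity
  have hzpow : ((m : ℝ) + 1 / 2) ^ n = ((m : ℝ) + 1 / 2) ^ N / ((m : ℝ) + 1 / 2) := by
    rw [show n = (N : ℤ) - 1 by omega, zpow_sub₀ hx.ne', zpow_natCast, zpow_one]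
  have hcb : (Nat.centralBinom m : ℝ) * (m.factorial : ℝ) * (m.factorial : ℝ) =
      ((2 * m).factorial : ℝ) := by
    have h := Nat.choose_mul_factorial_mul_factorial (show m ≤ 2 * m by omega)
    rw [show 2 * m - m = m by omega] at h
    rw [Nat.centralBinom]
    exact_mod_cast congrArg (Nat.cast : ℕ → ℝ) h
  have hfac : ((2 * m + 1).factorial : ℝ) = (2 * (m:ℝ) + 1) * ((2 * m).factorial : ℝ) := by
    rw [Nat.factorial_succ]; push_cast; ring
  have h2pow : (2 : ℝ) ^ (2 * m + 1) = 2 * 4 ^ m := by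
    rw [pow_succ, pow_mul]; norm_num; ring
  rw [hzpow, halfBinom_eq, hfac]
  rw [mul_pow (2:ℝ) z (2 * m + 1), h2pow]
  rw [aa, ← hcb]
  have h16 : (16 : ℝ) ^ m = 4 ^ m * 4 ^ m := by
    rw [show (16:ℝ) = 4 * 4 by norm_num, mul_pow]
  rw [h16]
  have hf : ((m.factorial : ℝ)) ≠ 0 := by exact_mod_cast m.factorial_ne_zero
  have hfc : (0:ℝ) < (Nat.centralBinom m : ℝ) := by exact_mod_cast m.centralBinom_pos
  have h4 : (4:ℝ) ^ m ≠ 0 := by positivity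
  have h2m1 : (2 * (m:ℝ) + 1) ≠ 0 := by positivity
  have hpi : Real.pi ≠ 0 := Real.pi_ne_zero
  field_simp
  ring

theorem etaCB_neg_integer (n : ℤ) (hn : -1 ≤ n) (z : ℝ) (hz : |z| < 1) :
    ∑' m : ℕ, (2 * z) ^ (2 * m + 1) * ((m : ℝ) + 1 / 2) ^ n / halfBinom m =
      Real.pi / 2 * (z * aeval (z ^ 2) (lehmerQ (n + 1).toNat)) /
        ((2 : ℝ) ^ n * (1 - z ^ 2) ^ ((n : ℝ) + 3 / 2)) := by
  set N : ℕ := (n + 1).toNat with hNdef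
  have hN : (N : ℤ) = n + 1 := Int.toNat_of_nonneg (by omega)
  have hkey := key_hasSum N z hz
  have hsummand : ∀ m : ℕ, (2 * z) ^ (2 * m + 1) * ((m : ℝ) + 1 / 2) ^ n / halfBinom m =
      Real.pi * (aa m * ((m : ℝ) + 1 / 2) ^ N * z ^ (2 * m + 1)) :=
    fun m => summand_eq n N hN z m
  rw [tsum_congr hsummand, (hkey.mul_left Real.pi).tsum_eq]
  rw [G]
  have hz2 : z ^ 2 < 1 := by nlinarith [sq_abs z, abs_nonneg z]
  have hA : (0:ℝ) < 1 - z ^ 2 := by linarith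
  have hexp : (n : ℝ) + 3 / 2 = (N : ℝ) + 1 / 2 := by
    have : (N : ℝ) = (n : ℝ) + 1 := by exact_mod_cast hN
    rw [this]; ring
  have h2z : (2 : ℝ) ^ n = 2 ^ N / 2 := by
    rw [show n = (N : ℤ) - 1 by omega, zpow_sub₀ (two_ne_zero), zpow_natCast, zpow_one]
  rw [hexp, h2z]
  have hs : (0:ℝ) < (1 - z ^ 2) ^ ((N : ℝ) + 1 / 2) := Real.rpow_pos_of_pos hA _
  have h2N : (2:ℝ) ^ N ≠ 0 := by positivity
  field_simp
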